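/- A finite lattice L is join-distributive if and only if L is semimodular and meet-semidistributive. -/

import Mathlib

set_option linter.unusedSectionVars false

/-- A lattice is join-distributive if for every non-maximal `x`, the interval `[x, x*]`
is distributive, where `x*` is the join (least upper bound) of the upper covers of `x`. -/
def JoinDistributive (α : Type*) [Lattice α] : Prop :=
  ∀ x u : α, ¬IsMax x → IsLUB {y | x ⋖ y} u →
    ∀ a ∈ Set.Icc x u, ∀ b ∈ Set.Icc x u, ∀ c ∈ Set.Icc x u,
      a ⊓ (b ⊔ c) = (a ⊓ b) ⊔ (a ⊓ c)

/-- A lattice is (upper) semimodular if `a ⊓ b ⋖ b` implies `a ⋖ a ⊔ b`. -/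
def Semimodular (α : Type*) [Lattice α] : Prop :=
  ∀ a b : α, a ⊓ b ⋖ b → a ⋖ a ⊔ b

/-- A lattice is meet-semidistributive if `x ⊓ y = x ⊓ z` implies `x ⊓ (y ⊔ z) = x ⊓ y`. -/
def MeetSemidistributive (α : Type*) [Lattice α] : Prop :=
  ∀ x y z : α, x ⊓ y = x ⊓ z → x ⊓ (y ⊔ z) = x ⊓ y

section Aux

variable {L : Type*} [Lattice L] [Fintype L]

/-- The sup of the covers of `m` exists (given that there is at least one cover). -/
lemma exists_star' {m q : L} (hq : m ⋖ q) : ∃ u : L, IsLUB {y | m ⋖ y} u := by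
  classical
  refine ⟨(Finset.univ.filter fun y => m ⋖ y).sup' ⟨q, by simp [hq]⟩ id, ?_, ?_⟩
  · intro y hy
    exact Finset.le_sup' id (by simp [hy.out])
  · intro v hv
    exact Finset.sup'_le _ _ fun b hb => hv (by simpa using hb)

/-- If `q` doesn't lie below `y ≥ m`, and `m ⋖ q`, then `q ⊓ y = m`. -/
lemma inf_of_cov {m q y : L} (hq : m ⋖ q) (hmy : m ≤ y) (h : ¬ q ≤ y) : q ⊓ y = m := by
  rcases hq.wcovBy.eq_or_eq (le_inf hq.lt.le hmy) inf_le_left with h' | h'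
  · exact h'
  · exact absurd (inf_eq_left.mp h') h

/-- In a join-distributive lattice, the join of two distinct covers of `m` covers each. -/
lemma atomjoin (hJD : JoinDistributive L) {m q r : L} (hq : m ⋖ q) (hr : m ⋖ r)
    (hne : q ≠ r) : q ⋖ q ⊔ r := by
  obtain ⟨u, hu⟩ := exists_star' hq
  have hmax : ¬IsMax m := hq.lt.not_isMax
  have hqu : q ≤ u := hu.1 hq
  have hru : r ≤ u := hu.1 hr
  have hrq : ¬ r ≤ q := by
    intro h
    rcases hq.wcovBy.eq_or_eq hr.lt.le h with h' | h'
    · exact hr.lt.ne' h'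
    · exact hne h'.symm
  constructor
  · exact lt_of_le_of_ne le_sup_left (fun h => hrq (h ▸ le_sup_right))
  · intro t hqt htlt
    have ht : t ∈ Set.Icc m u := ⟨hq.lt.le.trans hqt.le, htlt.le.trans (sup_le hqu hru)⟩
    have hJ := hJD m u hmax hu t ht q ⟨hq.lt.le, hqu⟩ r ⟨hr.lt.le, hru⟩
    rw [inf_eq_left.mpr htlt.le, inf_eq_right.mpr hqt.le] at hJ
    rcases hr.wcovBy.eq_or_eq (le_inf (hq.lt.le.trans hqt.le) hr.lt.le) inf_le_right with h' | h'
    · rw [h'] at hJ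
      exact hqt.ne' (hJ.trans (sup_eq_left.mpr hq.lt.le))
    · rw [h'] at hJ
      exact htlt.ne hJ

/-- Join-distributive implies semimodular. -/
lemma jd_sm (hJD : JoinDistributive L) : Semimodular L := by
  suffices H : ∀ n : ℕ, ∀ a b : L, a ⊓ b ⋖ b → (Set.Icc (a ⊓ b) a).ncard ≤ n → a ⋖ a ⊔ b by
    intro a b hab
    exact H _ a b hab le_rfl
  intro n
  induction n with
  | zero =>
    intro a b hab hcard
    exact absurd hcard (by
      simp only [not_le]
      exact (Set.ncard_pos (Set.toFinite _)).mpr ⟨a ⊓ b, le_rfl, inf_le_left⟩)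
  | succ n ih =>
    intro a b hab hcard
    by_cases hma : a ≤ a ⊓ b
    · have hab' : a ≤ b := hma.trans inf_le_right
      rw [sup_eq_right.mpr hab']
      rwa [inf_eq_left.mpr hab'] at hab
    · have hba : ¬ b ≤ a := by
        intro h
        rw [inf_eq_right.mpr h] at hab
        exact hab.lt.ne rfl
      have hlt : a ⊓ b < a := lt_of_le_not_ge inf_le_left hma
      obtain ⟨a', ha'c, ha'le⟩ := hlt.exists_covby_le
      have hne : a' ≠ b := fun h => hba (h ▸ ha'le)
      have hb' : a' ⋖ a' ⊔ b := atomjoin hJD ha'c hab hne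
      have key : a ⊓ (a' ⊔ b) = a' := by
        rcases hb'.wcovBy.eq_or_eq (le_inf ha'le le_sup_left) inf_le_right with h | h
        · exact h
        · exact absurd ((inf_eq_right.mp h).trans' le_sup_right : b ≤ a) hba
      have hcov : a ⊓ (a' ⊔ b) ⋖ a' ⊔ b := by rw [key]; exact hb'
      have hrec := ih a (a' ⊔ b) hcov (by
        rw [key]
        have hsub : Set.Icc a' a ⊂ Set.Icc (a ⊓ b) a := by
          constructor
          · exact Set.Icc_subset_Icc ha'c.lt.le le_rfl
          · intro hsub'
            exact ha'c.lt.not_ge (hsub' ⟨le_rfl, inf_le_left⟩).1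
        have := Set.ncard_lt_ncard hsub (Set.toFinite _)
        omega)
      have : a ⊔ (a' ⊔ b) = a ⊔ b := by
        rw [← sup_assoc, sup_eq_left.mpr ha'le]
      rwa [this] at hrec

/-- In a join-distributive finite lattice, covers of `m` are join-prime over `m`. -/
lemma jd_prime (hJD : JoinDistributive L) {m p y z : L} (hp : m ⋖ p) (hy : m ≤ y)
    (hz : m ≤ z) (hpy : p ⊓ y = m) (hpz : p ⊓ z = m) : ¬ p ≤ y ⊔ z := by
  set K := Fintype.card L with hK
  suffices H : ∀ n : ℕ, ∀ m p y z : L,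
      (Set.Icc m (y ⊔ z)).ncard * (2 * K + 1) + (Set.Icc m y).ncard + (Set.Icc m z).ncard ≤ n →
      m ⋖ p → m ≤ y → m ≤ z → p ⊓ y = m → p ⊓ z = m → ¬ p ≤ y ⊔ z by
    exact H _ m p y z le_rfl hp hy hz hpy hpz
  intro n
  induction n with
  | zero =>
    intro m p y z hmeas hp hmy hmz hpy hpz hple
    have h1 : 0 < (Set.Icc m (y ⊔ z)).ncard :=
      (Set.ncard_pos (Set.toFinite _)).mpr ⟨m, le_rfl, hmy.trans le_sup_left⟩
    have h2 : 2 * K + 1 ≤ (Set.Icc m (y ⊔ z)).ncard * (2 * K + 1) :=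
      Nat.le_mul_of_pos_left _ h1
    omega
  | succ n ih =>
    intro m p y z hmeas hp hmy hmz hpy hpz hple
    have hcardK : ∀ a b : L, (Set.Icc a b).ncard ≤ K := by
      intro a b
      have := Set.ncard_le_ncard (Set.subset_univ (Set.Icc a b)) (Set.toFinite _)
      rwa [Set.ncard_univ, Nat.card_eq_fintype_card] at this
    have hnp_y : ¬ p ≤ y := fun h => hp.lt.ne' (by rw [← hpy, inf_eq_left.mpr h])
    have hnp_z : ¬ p ≤ z := fun h => hp.lt.ne' (by rw [← hpz, inf_eq_left.mpr h])
    by_cases hym : y ≤ m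
    · exact hnp_z (hple.trans (sup_le (hym.trans hmz) le_rfl))
    by_cases hzm : z ≤ m
    · exact hnp_y (hple.trans (sup_le le_rfl (hzm.trans hmy)))
    obtain ⟨y₁, hy₁, hy₁le⟩ := (lt_of_le_not_ge hmy hym).exists_covby_le
    obtain ⟨z₁, hz₁, hz₁le⟩ := (lt_of_le_not_ge hmz hzm).exists_covby_le
    have red : ∀ Y Z Y₁ : L, m ≤ Z → m ⋖ Y₁ → Y₁ < Y → p ⊓ Y = m → p ⊓ Z = m → p ≤ Y ⊔ Z →
        (Set.Icc m (Y ⊔ Z)).ncard * (2 * K + 1) + (Set.Icc m Y).ncard + (Set.Icc m Z).ncard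
          ≤ n + 1 → False := by
      intro Y Z Y₁ hmZ hY₁ hY₁lt hpY hpZ hpYZ hm
      have hnpY : ¬ p ≤ Y := fun h => hp.lt.ne' (by rw [← hpY, inf_eq_left.mpr h])
      by_cases hcase : p ≤ Y₁ ⊔ Z
      · refine ih m p Y₁ Z ?_ hp hY₁.lt.le hmZ
          (le_antisymm ((inf_le_inf_left p hY₁lt.le).trans hpY.le)
            (le_inf hp.lt.le hY₁.lt.le)) hpZ hcase
        have hf : (Set.Icc m (Y₁ ⊔ Z)).ncard ≤ (Set.Icc m (Y ⊔ Z)).ncard :=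
          Set.ncard_le_ncard (Set.Icc_subset_Icc le_rfl (sup_le_sup_right hY₁lt.le _))
            (Set.toFinite _)
        have hs : (Set.Icc m Y₁).ncard < (Set.Icc m Y).ncard := by
          refine Set.ncard_lt_ncard ⟨Set.Icc_subset_Icc le_rfl hY₁lt.le, fun hsub => ?_⟩
            (Set.toFinite _)
          exact hY₁lt.not_ge (hsub ⟨hY₁.lt.le.trans hY₁lt.le, le_rfl⟩).2
        have hmul : (Set.Icc m (Y₁ ⊔ Z)).ncard * (2 * K + 1)
            ≤ (Set.Icc m (Y ⊔ Z)).ncard * (2 * K + 1) := Nat.mul_le_mul_right _ hf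
        linarith only [hmul, hs, hm]
      · have hpne : p ≠ Y₁ := fun h => hnpY (h ▸ hY₁lt.le)
        have hq : Y₁ ⋖ Y₁ ⊔ p := atomjoin hJD hY₁ hp (fun h => hpne h.symm)
        have h1 : (Y₁ ⊔ p) ⊓ Y = Y₁ := by
          rcases hq.wcovBy.eq_or_eq (le_inf le_sup_left hY₁lt.le) inf_le_left with h | h
          · exact h
          · exact absurd (le_sup_right.trans (inf_eq_left.mp h) : p ≤ Y) hnpY
        have h2 : (Y₁ ⊔ p) ⊓ (Z ⊔ Y₁) = Y₁ := by
          rcases hq.wcovBy.eq_or_eq (le_inf le_sup_left le_sup_right) inf_le_left with h | h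
          · exact h
          · refine absurd ?_ hcase
            have : p ≤ Z ⊔ Y₁ := le_sup_right.trans (inf_eq_left.mp h)
            rwa [sup_comm] at this
        have h3 : Y₁ ⊔ p ≤ Y ⊔ (Z ⊔ Y₁) :=
          sup_le (le_sup_of_le_right le_sup_right)
            (hpYZ.trans (sup_le (le_sup_left) (le_sup_of_le_right le_sup_left)))
        refine ih Y₁ (Y₁ ⊔ p) Y (Z ⊔ Y₁) ?_ hq hY₁lt.le le_sup_right h1 h2 h3
        have hYZ : Y ⊔ (Z ⊔ Y₁) = Y ⊔ Z := by
          rw [← sup_assoc]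
          exact sup_eq_left.mpr (hY₁lt.le.trans le_sup_left)
        rw [hYZ]
        have hfs : (Set.Icc Y₁ (Y ⊔ Z)).ncard < (Set.Icc m (Y ⊔ Z)).ncard := by
          refine Set.ncard_lt_ncard ⟨Set.Icc_subset_Icc hY₁.lt.le le_rfl, fun hsub => ?_⟩
            (Set.toFinite _)
          exact hY₁.lt.not_ge (hsub ⟨le_rfl, hY₁.lt.le.trans (hY₁lt.le.trans le_sup_left)⟩).1
        have hmul : ((Set.Icc Y₁ (Y ⊔ Z)).ncard + 1) * (2 * K + 1)
            ≤ (Set.Icc m (Y ⊔ Z)).ncard * (2 * K + 1) := Nat.mul_le_mul_right _ hfs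
        have hexp : ((Set.Icc Y₁ (Y ⊔ Z)).ncard + 1) * (2 * K + 1)
            = (Set.Icc Y₁ (Y ⊔ Z)).ncard * (2 * K + 1) + (2 * K + 1) := by ring
        have hb1 := hcardK Y₁ Y
        have hb2 := hcardK Y₁ (Z ⊔ Y₁)
        linarith only [hmul, hexp, hb1, hb2, hm]
    by_cases hy1 : y₁ = y
    · by_cases hz1 : z₁ = z
      · have hcy : m ⋖ y := hy1 ▸ hy₁
        have hcz : m ⋖ z := hz1 ▸ hz₁
        obtain ⟨u, hu⟩ := exists_star' hp
        have hmax : ¬IsMax m := hp.lt.not_isMax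
        have hJ := hJD m u hmax hu p ⟨hp.lt.le, hu.1 hp⟩ y ⟨hcy.lt.le, hu.1 hcy⟩
          z ⟨hcz.lt.le, hu.1 hcz⟩
        rw [hpy, hpz, sup_idem] at hJ
        exact hp.lt.ne' (by rw [← hJ, inf_eq_left.mpr hple])
      · refine red z y z₁ hmy hz₁ (hz₁le.lt_of_ne hz1) hpz hpy (by rwa [sup_comm]) ?_
        have hcc : (Set.Icc m (z ⊔ y)).ncard = (Set.Icc m (y ⊔ z)).ncard := by rw [sup_comm]
        linarith only [hcc, hmeas, Nat.mul_le_mul_right (2 * K + 1) hcc.le]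
    · exact red y z y₁ hmz hy₁ (hy₁le.lt_of_ne hy1) hpy hpz hple hmeas

/-- Join-distributive implies meet-semidistributive. -/
lemma jd_sd (hJD : JoinDistributive L) : MeetSemidistributive L := by
  intro x y z hxy
  have hle : x ⊓ y ≤ x ⊓ (y ⊔ z) := le_inf inf_le_left (inf_le_right.trans le_sup_left)
  by_contra h
  have hlt : x ⊓ y < x ⊓ (y ⊔ z) := hle.lt_of_ne (fun h' => h h'.symm)
  obtain ⟨p, hpc, hple⟩ := hlt.exists_covby_le
  have hpx : p ≤ x := hple.trans inf_le_left
  have hyz : x ⊓ y ≤ z := hxy.le.trans inf_le_right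
  refine jd_prime hJD hpc inf_le_right hyz ?_ ?_ (hple.trans inf_le_right)
  · exact le_antisymm (inf_le_inf_right y hpx) (le_inf hpc.lt.le inf_le_right)
  · exact le_antisymm ((inf_le_inf_right z hpx).trans hxy.ge) (le_inf hpc.lt.le hyz)

/-- Semimodular and meet-semidistributive imply join-distributive. -/
lemma sm_sd_jd (hsm : Semimodular L) (hsd : MeetSemidistributive L) : JoinDistributive L := by
  intro x u hx hu a ha b hb c hc
  classical
  -- covers of `x` are join-prime
  have prime : ∀ p y z : L, x ⋖ p → x ≤ y → x ≤ z → p ≤ y ⊔ z → p ≤ y ∨ p ≤ z := by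
    intro p y z hp hxy hxz hple
    by_contra hcon
    push_neg at hcon
    have h1 : p ⊓ y = x := inf_of_cov hp hxy hcon.1
    have h2 : p ⊓ z = x := inf_of_cov hp hxz hcon.2
    have h3 := hsd p y z (h1.trans h2.symm)
    rw [inf_eq_left.mpr hple, h1] at h3
    exact hp.lt.ne' h3
  -- every element of `[x, u]` is determined by the covers of `x` below it
  have main : ∀ a : L, a ∈ Set.Icc x u → ∀ w : L, x ≤ w → w ≤ a →
      (∀ q : L, x ⋖ q → q ≤ a → q ≤ w) → a = w := by
    rintro a ⟨hxa, hau⟩ w hxw hwa hq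
    have step : ∀ q : L, x ⋖ q → a ⊓ (w ⊔ q) = w := by
      intro q hcq
      by_cases hql : q ≤ w
      · rw [sup_eq_left.mpr hql, inf_eq_right.mpr hwa]
      · have h1 : w ⊓ q = x := by
          rw [inf_comm]
          exact inf_of_cov hcq hxw hql
        have h2 : w ⋖ w ⊔ q := hsm w q (by rw [h1]; exact hcq)
        rcases h2.wcovBy.eq_or_eq (le_inf hwa le_sup_left) inf_le_right with h | h
        · exact h
        · exact absurd (hq q hcq (le_sup_right.trans (inf_eq_left.mp (inf_comm a (w ⊔ q) ▸ h))))
            hql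
    have base_le : ∀ T : Finset L, w ≤ T.fold ((· ⊔ ·) : L → L → L) w id := by
      intro T
      induction T using Finset.induction_on with
      | empty => rw [Finset.fold_empty]
      | insert _ _ hqT ih => rw [Finset.fold_insert hqT]; exact ih.trans le_sup_right
    have mem_le : ∀ T : Finset L, ∀ p ∈ T, p ≤ T.fold ((· ⊔ ·) : L → L → L) w id := by
      intro T
      induction T using Finset.induction_on with
      | empty => intro p hp; exact absurd hp (Finset.notMem_empty p)
      | @insert q T hqT ih =>
        intro p hp
        rw [Finset.fold_insert hqT]
        rcases Finset.mem_insert.mp hp with h | h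
        · exact h ▸ le_sup_left
        · exact (ih p h).trans le_sup_right
    have fold_eq : ∀ T : Finset L, (∀ q ∈ T, x ⋖ q) → a ⊓ T.fold ((· ⊔ ·) : L → L → L) w id = w := by
      intro T
      induction T using Finset.induction_on with
      | empty => intro _; rw [Finset.fold_empty]; exact inf_eq_right.mpr hwa
      | @insert q T hqT ih =>
        intro hT
        have hih := ih (fun r hr => hT r (Finset.mem_insert_of_mem hr))
        rw [Finset.fold_insert hqT]
        show a ⊓ (q ⊔ T.fold ((· ⊔ ·) : L → L → L) w id) = w
        have hrw : q ⊔ T.fold ((· ⊔ ·) : L → L → L) w id = (w ⊔ q) ⊔ T.fold ((· ⊔ ·) : L → L → L) w id := by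
          rw [sup_comm w q, sup_assoc, sup_eq_right.mpr (base_le T)]
        rw [hrw]
        have := hsd a (w ⊔ q) (T.fold ((· ⊔ ·) : L → L → L) w id)
          ((step q (hT q (Finset.mem_insert_self q T))).trans hih.symm)
        rw [this, step q (hT q (Finset.mem_insert_self q T))]
    set C : Finset L := Finset.univ.filter (fun q => x ⋖ q) with hC
    have hfold := fold_eq C (by intro q hq; simpa [hC] using hq)
    have huF : u ≤ C.fold ((· ⊔ ·) : L → L → L) w id := hu.2 (fun y hy => mem_le C y (by simp [hC, hy.out]))
    have : a ⊓ C.fold ((· ⊔ ·) : L → L → L) w id = a := inf_eq_left.mpr (hau.trans huF)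
    exact this.symm.trans hfold
  -- conclude distributivity
  refine le_antisymm ?_ le_inf_sup
  have hd : a ⊓ (b ⊔ c) ∈ Set.Icc x u :=
    ⟨le_inf ha.1 (hb.1.trans le_sup_left), inf_le_left.trans ha.2⟩
  have hw := main (a ⊓ (b ⊔ c)) hd ((a ⊓ (b ⊔ c)) ⊓ (a ⊓ b ⊔ a ⊓ c))
    (le_inf hd.1 ((le_inf ha.1 hb.1).trans le_sup_left)) inf_le_left ?_
  · calc a ⊓ (b ⊔ c) = (a ⊓ (b ⊔ c)) ⊓ (a ⊓ b ⊔ a ⊓ c) := hw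
      _ ≤ a ⊓ b ⊔ a ⊓ c := inf_le_right
  · intro q hcq hqle
    have hqa : q ≤ a := hqle.trans inf_le_left
    refine le_inf hqle ?_
    rcases prime q b c hcq hb.1 hc.1 (hqle.trans inf_le_right) with h | h
    · exact (le_inf hqa h).trans le_sup_left
    · exact (le_inf hqa h).trans le_sup_right

end Aux

/-- A finite lattice is join-distributive if and only if it is
semimodular and meet-semidistributive. -/
theorem statement16 (L : Type*) [Lattice L] [Fintype L] :
    JoinDistributive L ↔ Semimodular L ∧ MeetSemidistributive L :=
  ⟨fun h => ⟨jd_sm h, jd_sd h⟩, fun h => sm_sd_jd h.1 h.2⟩
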